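/- Let n, k ∈ ℕ with k ≤ n, let a : Fin n → ℝ be strictly increasing, set A = diag(a_0, …, a_{n−1}), and fix a k-element subset I = {i_1 < ⋯ < i_k} ⊆ Fin n with coordinate subspace E_I = span{e_i : i ∈ I}. For a k-dimensional subspace V ⊆ ℂ^n, the orthogonal projection matrices P_{exp(−tA)·V} converge in operator norm to P_{E_I} as t → −∞ if and only if V is the column span of an n×k matrix M, necessarily unique, whose entries satisfy: M_{i_j, j} = 1 for each 1 ≤ j ≤ k; M_{l, j} = 0 whenever l > i_j; and M_{i_m, j} = 0 whenever m ≠ j. Consequently, the unstable set of E_I under the flow V ↦ exp(−tA)·V is in bijection with ∏_{j=1}^{k} ℂ^{i_j − j}, a complex affine space of dimension Σ_{j=1}^{k} (i_j − j). -/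

import Mathlib

namespace Stmt11

/-- The linear map `exp(−tA) = diag(e^{−t a₀}, …, e^{−t a_{n−1}})` on `ℂⁿ`,
for `A = diag(a₀, …, a_{n−1})`. -/
noncomputable def flowMap (n : ℕ) (a : Fin n → ℝ) (t : ℝ) :
    EuclideanSpace ℂ (Fin n) →ₗ[ℂ] EuclideanSpace ℂ (Fin n) :=
  ((WithLp.linearEquiv 2 ℂ (Fin n → ℂ)).symm.toLinearMap.comp
      (LinearMap.pi fun j : Fin n =>
        (Real.exp (-(t * a j)) : ℂ) • (LinearMap.proj j : (Fin n → ℂ) →ₗ[ℂ] ℂ))).comp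
    (WithLp.linearEquiv 2 ℂ (Fin n → ℂ)).toLinearMap

/-- The orthogonal projection of `ℂⁿ` onto a subspace `V`, as a continuous linear
map `ℂⁿ → ℂⁿ` (the "projection matrix"). -/
noncomputable def projCLM {n : ℕ} (V : Submodule ℂ (EuclideanSpace ℂ (Fin n))) :
    EuclideanSpace ℂ (Fin n) →L[ℂ] EuclideanSpace ℂ (Fin n) :=
  V.subtypeL.comp (V.orthogonalProjection)

/-- The coordinate subspace `E_I = span {eᵢ : i ∈ I}` of `ℂⁿ`. -/
noncomputable def coordSub (n : ℕ) (I : Finset (Fin n)) :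
    Submodule ℂ (EuclideanSpace ℂ (Fin n)) :=
  Submodule.span ℂ ((fun i => EuclideanSpace.single i (1 : ℂ)) '' (I : Set (Fin n)))

/-- The `j`-th column of an `n × k` matrix, as a vector of `ℂⁿ`. -/
noncomputable def colVec {n k : ℕ} (M : Matrix (Fin n) (Fin k) ℂ) (j : Fin k) :
    EuclideanSpace ℂ (Fin n) :=
  (WithLp.linearEquiv 2 ℂ (Fin n → ℂ)).symm (fun l => M l j)

/-- The column span of an `n × k` matrix. -/
noncomputable def colSpan {n k : ℕ} (M : Matrix (Fin n) (Fin k) ℂ) :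
    Submodule ℂ (EuclideanSpace ℂ (Fin n)) :=
  Submodule.span ℂ (Set.range (colVec M))

/-- The echelon conditions on `M` relative to the pivot embedding
`σ : Fin k ↪o Fin n` (with `σ j` the `j`-th pivot row, `I = {i₁ < ⋯ < i_k}`):
`M_{i_j, j} = 1`; `M_{l, j} = 0` for `l > i_j`; `M_{i_m, j} = 0` for `m ≠ j`. -/
def Echelon {n k : ℕ} (σ : Fin k ↪o Fin n) (M : Matrix (Fin n) (Fin k) ℂ) : Prop :=
  (∀ j : Fin k, M (σ j) j = 1) ∧
  (∀ (j : Fin k) (l : Fin n), σ j < l → M l j = 0) ∧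
  (∀ j m : Fin k, m ≠ j → M (σ m) j = 0)

/-! ### Auxiliary lemmas -/

open Filter Topology
open scoped InnerProductSpace

variable {n k : ℕ} {σ : Fin k ↪o Fin n} {M M' : Matrix (Fin n) (Fin k) ℂ}

section Basics

lemma euclid_ext {x y : EuclideanSpace ℂ (Fin n)} (h : ∀ l, x l = y l) : x = y :=
  (WithLp.linearEquiv 2 ℂ (Fin n → ℂ)).injective (funext h)

lemma li_of_pivot (u : Fin k → EuclideanSpace ℂ (Fin n))
    (hu : ∀ j m, u j (σ m) = if m = j then 1 else 0) : LinearIndependent ℂ u := by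
  rw [Fintype.linearIndependent_iff]
  intro c hc m
  have h1 : (∑ j, c j • u j) (σ m) = c m := by
    rw [WithLp.ofLp_sum, Finset.sum_apply]
    simp only [PiLp.smul_apply, smul_eq_mul, hu]
    simp
  have := congrArg (fun w : EuclideanSpace ℂ (Fin n) => w (σ m)) hc
  simpa [h1] using this

lemma Echelon.pivot (h : Echelon σ M) (j m : Fin k) :
    colVec M j (σ m) = if m = j then 1 else 0 := by
  show M (σ m) j = _
  rcases eq_or_ne m j with rfl | hne
  · simp [h.1 m]
  · simp [hne, h.2.2 j m hne]

lemma Echelon.li (h : Echelon σ M) : LinearIndependent ℂ (colVec M) :=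
  li_of_pivot _ h.pivot

lemma sum_pivot (h : Echelon σ M) (c : Fin k → ℂ) (m : Fin k) :
    (∑ j, c j • colVec M j) (σ m) = c m := by
  rw [WithLp.ofLp_sum, Finset.sum_apply]
  simp only [PiLp.smul_apply, smul_eq_mul, h.pivot]
  simp

lemma Echelon.coord (h : Echelon σ M) {w : EuclideanSpace ℂ (Fin n)} (hw : w ∈ colSpan M) :
    w = ∑ j, w (σ j) • colVec M j := by
  rw [colSpan] at hw
  obtain ⟨c, rfl⟩ := (Submodule.mem_span_range_iff_exists_fun ℂ).1 hw
  have hc : ∀ m, (∑ j, c j • colVec M j) (σ m) = c m := sum_pivot h c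
  simp only [hc]

lemma Echelon.colSpan_unique (h : Echelon σ M) (h' : Echelon σ M')
    (hs : colSpan M = colSpan M') : M = M' := by
  ext l j
  have hmem : colVec M' j ∈ colSpan M := by
    rw [hs]; exact Submodule.subset_span ⟨j, rfl⟩
  have := h.coord hmem
  have : colVec M' j = colVec M j := by
    rw [this]
    have : ∀ m, colVec M' j (σ m) = if m = j then 1 else 0 := h'.pivot j
    simp only [this]
    rw [Finset.sum_eq_single j] <;> simp +contextual
  have := congrArg (fun w : EuclideanSpace ℂ (Fin n) => w l) this
  exact this.symm

lemma Echelon.finrank_colSpan (h : Echelon σ M) :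
    Module.finrank ℂ (colSpan M) = k := by
  rw [colSpan, finrank_span_eq_card h.li, Fintype.card_fin]

end Basics

/-! ### The projection formula `P = B (B*B)⁻¹ B*` -/

section Proj

noncomputable def Bmap (w : Fin k → EuclideanSpace ℂ (Fin n)) :
    EuclideanSpace ℂ (Fin k) →L[ℂ] EuclideanSpace ℂ (Fin n) :=
  ∑ j, (ContinuousLinearMap.smulRightL ℂ (EuclideanSpace ℂ (Fin k)) (EuclideanSpace ℂ (Fin n))
    (EuclideanSpace.proj j)) (w j)

local notation "En" => EuclideanSpace ℂ (Fin n)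
local notation "Fk" => EuclideanSpace ℂ (Fin k)

lemma Bmap_apply (w : Fin k → En) (c : Fk) : Bmap w c = ∑ j, c j • w j := by
  rw [Bmap, ContinuousLinearMap.sum_apply]
  rfl

lemma Bmap_single (w : Fin k → En) (j : Fin k) :
    Bmap w (EuclideanSpace.single j 1) = w j := by
  rw [Bmap_apply, Finset.sum_eq_single j] <;> simp +contextual [EuclideanSpace.single_apply]

lemma range_Bmap (w : Fin k → En) :
    LinearMap.range (Bmap w : Fk →ₗ[ℂ] En) = Submodule.span ℂ (Set.range w) := by
  apply le_antisymm
  · rintro x ⟨c, rfl⟩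
    rw [ContinuousLinearMap.coe_coe, Bmap_apply]
    exact Submodule.sum_mem _ fun j _ =>
      Submodule.smul_mem _ _ (Submodule.subset_span ⟨j, rfl⟩)
  · rw [Submodule.span_le]
    rintro x ⟨j, rfl⟩
    exact ⟨EuclideanSpace.single j 1, Bmap_single w j⟩

lemma Bmap_inj (w : Fin k → En) (hw : LinearIndependent ℂ w) :
    Function.Injective (Bmap w) := by
  rw [injective_iff_map_eq_zero]
  intro c hc
  rw [Bmap_apply] at hc
  have := (Fintype.linearIndependent_iff.1 hw) (fun j => c j) hc
  ext j; exact this j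

lemma adjoint_Bmap_apply (w : Fin k → En) (x : En) (j : Fin k) :
    (ContinuousLinearMap.adjoint (Bmap w)) x j = ⟪w j, x⟫_ℂ := by
  have h1 : (ContinuousLinearMap.adjoint (Bmap w)) x j
      = ⟪EuclideanSpace.single j (1:ℂ), (ContinuousLinearMap.adjoint (Bmap w)) x⟫_ℂ := by
    rw [EuclideanSpace.inner_single_left]; simp
  rw [h1, ContinuousLinearMap.adjoint_inner_right, Bmap_single]

noncomputable def Gram (w : Fin k → En) : Fk →L[ℂ] Fk :=
  (ContinuousLinearMap.adjoint (Bmap w)).comp (Bmap w)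

lemma isUnit_Gram (w : Fin k → En) (hw : LinearIndependent ℂ w) : IsUnit (Gram w) := by
  rw [ContinuousLinearMap.isUnit_iff_bijective]
  have hinj : Function.Injective (Gram w) := by
    rw [injective_iff_map_eq_zero]
    intro c hc
    have h2 : ⟪Gram w c, c⟫_ℂ = ⟪Bmap w c, Bmap w c⟫_ℂ := by
      rw [Gram, ContinuousLinearMap.comp_apply, ContinuousLinearMap.adjoint_inner_left]
    rw [hc, inner_zero_left] at h2
    have : Bmap w c = 0 := by
      rwa [eq_comm, inner_self_eq_zero] at h2
    exact Bmap_inj w hw (by rw [this, map_zero])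
  exact ⟨hinj, LinearMap.surjective_of_injective
    (f := ((Gram w : Fk →L[ℂ] Fk) : Fk →ₗ[ℂ] Fk)) hinj⟩

lemma Gram_inverse_cancel (w : Fin k → En) (hw : LinearIndependent ℂ w) :
    (Gram w).comp (Ring.inverse (Gram w)) = ContinuousLinearMap.id ℂ Fk :=
  Ring.mul_inverse_cancel _ (isUnit_Gram w hw)

noncomputable def Qmap (w : Fin k → En) : En →L[ℂ] En :=
  (Bmap w).comp ((Ring.inverse (Gram w)).comp (ContinuousLinearMap.adjoint (Bmap w)))

lemma projCLM_eq_Qmap (w : Fin k → En) (hw : LinearIndependent ℂ w) :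
    projCLM (Submodule.span ℂ (Set.range w)) = Qmap w := by
  refine ContinuousLinearMap.ext fun v => ?_
  have hmem : Qmap w v ∈ Submodule.span ℂ (Set.range w) := by
    rw [← range_Bmap]; exact ⟨_, rfl⟩
  have horth : ∀ z ∈ Submodule.span ℂ (Set.range w), ⟪v - Qmap w v, z⟫_ℂ = 0 := by
    have hadj : (ContinuousLinearMap.adjoint (Bmap w)) (v - Qmap w v) = 0 := by
      rw [map_sub]
      have : (ContinuousLinearMap.adjoint (Bmap w)) (Qmap w v)
          = (ContinuousLinearMap.adjoint (Bmap w)) v := by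
        show ((ContinuousLinearMap.adjoint (Bmap w)).comp (Qmap w)) v = _
        rw [Qmap, ← ContinuousLinearMap.comp_assoc, ← ContinuousLinearMap.comp_assoc]
        rw [show (ContinuousLinearMap.adjoint (Bmap w)).comp (Bmap w) = Gram w from rfl]
        rw [ContinuousLinearMap.comp_assoc]
        rw [← ContinuousLinearMap.comp_assoc (Gram w)]
        rw [Gram_inverse_cancel w hw]
        simp
      rw [this, sub_self]
    intro z hz
    induction hz using Submodule.span_induction with
    | mem x hx =>
      obtain ⟨j, rfl⟩ := hx
      have := congrArg (fun f : Fk => f j) hadj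
      simp only at this
      rw [adjoint_Bmap_apply] at this
      rw [← inner_conj_symm]
      simp only [this]
      simp
    | zero => simp
    | add x y _ _ hx hy => rw [inner_add_right, hx, hy, add_zero]
    | smul c x _ hx => rw [inner_smul_right, hx, mul_zero]
  show (Submodule.span ℂ (Set.range w)).starProjection v = _
  exact Submodule.eq_starProjection_of_mem_of_inner_eq_zero hmem horth

/-! ### Continuity of the projection formula -/

lemma comp_tendsto {𝕜 E' F' G : Type*} [NontriviallyNormedField 𝕜]
    [NormedAddCommGroup E'] [NormedSpace 𝕜 E'] [NormedAddCommGroup F'] [NormedSpace 𝕜 F']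
    [NormedAddCommGroup G] [NormedSpace 𝕜 G]
    {α : Type*} {l : Filter α} {f : α → F' →L[𝕜] G} {g : α → E' →L[𝕜] F'}
    {f₀ : F' →L[𝕜] G} {g₀ : E' →L[𝕜] F'} (hf : Tendsto f l (𝓝 f₀)) (hg : Tendsto g l (𝓝 g₀)) :
    Tendsto (fun x => (f x).comp (g x)) l (𝓝 (f₀.comp g₀)) := by
  have := (isBoundedBilinearMap_comp (𝕜 := 𝕜) (E := E') (F := F') (G := G)).continuous
  exact (this.tendsto (f₀, g₀)).comp (hf.prodMk_nhds hg)

lemma Bmap_tendsto {α : Type*} {l : Filter α} {w : α → Fin k → En} {w₀ : Fin k → En}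
    (hw : ∀ j, Tendsto (fun x => w x j) l (𝓝 (w₀ j))) :
    Tendsto (fun x => Bmap (w x)) l (𝓝 (Bmap w₀)) := by
  unfold Bmap
  exact tendsto_finset_sum _ fun j _ =>
    ((ContinuousLinearMap.smulRightL ℂ Fk En (EuclideanSpace.proj j)).continuous.tendsto
      (w₀ j)).comp (hw j)

lemma adjoint_tendsto {α : Type*} {l : Filter α} {B : α → Fk →L[ℂ] En} {B₀ : Fk →L[ℂ] En}
    (hB : Tendsto B l (𝓝 B₀)) :
    Tendsto (fun x => ContinuousLinearMap.adjoint (B x)) l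
      (𝓝 (ContinuousLinearMap.adjoint B₀)) :=
  ((ContinuousLinearMap.adjoint (E := Fk) (F := En)
    (𝕜 := ℂ)).continuous.tendsto B₀).comp hB

lemma Qmap_tendsto {α : Type*} {l : Filter α} {w : α → Fin k → En} {w₀ : Fin k → En}
    (hw : ∀ j, Tendsto (fun x => w x j) l (𝓝 (w₀ j))) (hli : LinearIndependent ℂ w₀) :
    Tendsto (fun x => Qmap (w x)) l (𝓝 (Qmap w₀)) := by
  have hB := Bmap_tendsto hw
  have hA := adjoint_tendsto hB
  have hG : Tendsto (fun x => Gram (w x)) l (𝓝 (Gram w₀)) := comp_tendsto hA hB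
  have hInv : Tendsto (fun x => Ring.inverse (Gram (w x))) l (𝓝 (Ring.inverse (Gram w₀))) := by
    obtain ⟨u, hu⟩ := isUnit_Gram w₀ hli
    rw [← hu] at hG ⊢
    exact (NormedRing.inverse_continuousAt u).tendsto.comp hG
  exact comp_tendsto hB (comp_tendsto hInv hA)

end Proj

/-! ### The flowed column vectors -/

section Flow

noncomputable def vecOf (f : Fin n → ℂ) : EuclideanSpace ℂ (Fin n) :=
  (WithLp.linearEquiv 2 ℂ (Fin n → ℂ)).symm f

lemma vecOf_apply (f : Fin n → ℂ) (l : Fin n) : vecOf f l = f l := rfl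

noncomputable def wfun (a : Fin n → ℝ) (M : Matrix (Fin n) (Fin k) ℂ) (σ : Fin k ↪o Fin n)
    (t : ℝ) (j : Fin k) : EuclideanSpace ℂ (Fin n) :=
  vecOf fun l => (Real.exp (t * (a (σ j) - a l)) : ℂ) * M l j

lemma wfun_eq_smul (a : Fin n → ℝ) (t : ℝ) (j : Fin k) :
    wfun a M σ t j = (Real.exp (t * a (σ j)) : ℂ) • flowMap n a t (colVec M j) := by
  apply (WithLp.linearEquiv 2 ℂ (Fin n → ℂ)).injective
  funext l
  show (Real.exp (t * (a (σ j) - a l)) : ℂ) * M l j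
      = (Real.exp (t * a (σ j)) : ℂ) * ((Real.exp (-(t * a l)) : ℂ) * M l j)
  rw [← mul_assoc, ← Complex.ofReal_mul, ← Real.exp_add]
  ring_nf

lemma span_wfun (a : Fin n → ℝ) (t : ℝ) :
    Submodule.span ℂ (Set.range (wfun a M σ t)) = (colSpan M).map (flowMap n a t) := by
  rw [colSpan, Submodule.map_span, ← Set.range_comp]
  apply le_antisymm
  · rw [Submodule.span_le]
    rintro x ⟨j, rfl⟩
    rw [wfun_eq_smul]
    exact Submodule.smul_mem _ _ (Submodule.subset_span ⟨j, rfl⟩)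
  · rw [Submodule.span_le]
    rintro x ⟨j, rfl⟩
    rw [Function.comp_apply]
    have : flowMap n a t (colVec M j)
        = (Real.exp (t * a (σ j)) : ℂ)⁻¹ • wfun a M σ t j := by
      rw [wfun_eq_smul, smul_smul, inv_mul_cancel₀ (by
        simp [Complex.ofReal_ne_zero, Real.exp_ne_zero]), one_smul]
    rw [this]
    exact Submodule.smul_mem _ _ (Submodule.subset_span ⟨j, rfl⟩)

lemma wfun_pivot (h : Echelon σ M) (a : Fin n → ℝ) (t : ℝ) (j m : Fin k) :
    wfun a M σ t j (σ m) = if m = j then 1 else 0 := by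
  rw [wfun, vecOf_apply]
  rcases eq_or_ne m j with rfl | hne
  · simp [h.1 m]
  · simp [hne, h.2.2 j m hne]

lemma wfun_tendsto (h : Echelon σ M) (a : Fin n → ℝ) (ha : StrictMono a) (j : Fin k) :
    Tendsto (fun t : ℝ => wfun a M σ t j) atBot
      (𝓝 (EuclideanSpace.single (σ j) (1 : ℂ))) := by
  rw [show (𝓝 (EuclideanSpace.single (σ j) (1:ℂ)))
    = 𝓝 ((PiLp.continuousLinearEquiv 2 ℂ (fun _ : Fin n => ℂ)).symm
        ((PiLp.continuousLinearEquiv 2 ℂ (fun _ : Fin n => ℂ))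
          (EuclideanSpace.single (σ j) (1:ℂ)))) from by simp]
  apply Tendsto.comp
    ((PiLp.continuousLinearEquiv 2 ℂ (fun _ : Fin n => ℂ)).symm.continuous.tendsto _)
  rw [tendsto_pi_nhds]
  intro l
  show Tendsto (fun t : ℝ => (Real.exp (t * (a (σ j) - a l)) : ℂ) * M l j) atBot
    (𝓝 (EuclideanSpace.single (σ j) (1:ℂ) l))
  rcases eq_or_ne l (σ j) with heq | hne
  · have hconst : (fun t : ℝ => (Real.exp (t * (a (σ j) - a l)) : ℂ) * M l j) = fun _ => 1 := by
      funext t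
      rw [heq, sub_self, mul_zero, Real.exp_zero, Complex.ofReal_one, one_mul]
      exact h.1 j
    rw [hconst]
    simp only [EuclideanSpace.single_apply, heq, if_pos rfl]
    exact tendsto_const_nhds
  · rcases lt_trichotomy l (σ j) with hlt | hcase | hgt
    · have h1 : Tendsto (fun t : ℝ => Real.exp (t * (a (σ j) - a l))) atBot (𝓝 0) := by
        apply Real.tendsto_exp_atBot.comp
        exact Filter.Tendsto.atBot_mul_const (sub_pos.2 (ha hlt)) tendsto_id
      have h2 : Tendsto (fun t : ℝ => (Real.exp (t * (a (σ j) - a l)) : ℂ)) atBot (𝓝 0) := by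
        rw [show ((0:ℂ)) = ((0:ℝ):ℂ) by simp]
        exact (Complex.continuous_ofReal.tendsto 0).comp h1
      have := h2.mul_const (M l j)
      rw [zero_mul] at this
      simpa [EuclideanSpace.single_apply, hne] using this
    · exact absurd hcase hne
    · have h0 : M l j = 0 := h.2.1 j l hgt
      simp only [h0, mul_zero]
      simp only [EuclideanSpace.single_apply, if_neg hne]
      exact tendsto_const_nhds

lemma singles_pivot (j m : Fin k) :
    EuclideanSpace.single (σ j) (1 : ℂ) (σ m) = if m = j then 1 else 0 := by
  rw [EuclideanSpace.single_apply]
  rcases eq_or_ne m j with rfl | hne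
  · simp
  · rw [if_neg (fun hc => hne (σ.injective hc)), if_neg hne]

lemma coordSub_eq_span (I : Finset (Fin n)) (hI : I.card = k) :
    coordSub n I = Submodule.span ℂ
      (Set.range fun j : Fin k => EuclideanSpace.single ((I.orderEmbOfFin hI) j) (1 : ℂ)) := by
  rw [coordSub, ← Finset.range_orderEmbOfFin I hI, ← Set.range_comp]
  rfl

/-- Main convergence lemma: echelon subspaces flow to the coordinate subspace. -/
lemma tendsto_of_echelon (a : Fin n → ℝ) (ha : StrictMono a)
    (I : Finset (Fin n)) (hI : I.card = k) {M : Matrix (Fin n) (Fin k) ℂ}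
    (h : Echelon (I.orderEmbOfFin hI) M) :
    Tendsto (fun t : ℝ => projCLM ((colSpan M).map (flowMap n a t))) atBot
      (𝓝 (projCLM (coordSub n I))) := by
  set σ := I.orderEmbOfFin hI with hσ
  have hQ : ∀ t : ℝ, projCLM ((colSpan M).map (flowMap n a t)) = Qmap (wfun a M σ t) := by
    intro t
    rw [← span_wfun a t, projCLM_eq_Qmap _ (li_of_pivot _ (fun j m => wfun_pivot h a t j m))]
  have hQ0 : projCLM (coordSub n I)
      = Qmap (fun j : Fin k => EuclideanSpace.single (σ j) (1:ℂ)) := by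
    rw [coordSub_eq_span I hI, projCLM_eq_Qmap _ (li_of_pivot _ (fun j m => singles_pivot j m))]
  rw [hQ0]
  have := Qmap_tendsto (w := fun t => wfun a M σ t)
    (w₀ := fun j => EuclideanSpace.single (σ j) (1:ℂ))
    (fun j => wfun_tendsto h a ha j) (li_of_pivot _ (fun j m => singles_pivot j m))
  exact Tendsto.congr (fun t => (hQ t).symm) this

end Flow

/-! ### Existence of echelon form and identification of subspaces -/

section Exists

lemma exists_top {v : EuclideanSpace ℂ (Fin n)} (hv : v ≠ 0) :
    ∃ l : Fin n, v l ≠ 0 ∧ ∀ m, l < m → v m = 0 := by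
  classical
  set s : Finset (Fin n) := Finset.univ.filter (fun l => v l ≠ 0) with hs
  have hne : s.Nonempty := by
    by_contra hcon
    rw [Finset.not_nonempty_iff_eq_empty] at hcon
    apply hv
    apply euclid_ext
    intro l
    show v l = 0
    by_contra hl
    have : l ∈ s := by simp [hs, hl]
    simp [hcon] at this
  refine ⟨s.max' hne, ?_, ?_⟩
  · have := s.max'_mem hne
    simpa [hs] using this
  · intro m hm
    by_contra hml
    have : m ∈ s := by simp [hs, hml]
    exact absurd (s.le_max' m this) (not_le.2 hm)

lemma exists_echelon (V : Submodule ℂ (EuclideanSpace ℂ (Fin n)))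
    (hV : Module.finrank ℂ V = k) :
    ∃ (J : Finset (Fin n)) (hJ : J.card = k) (M : Matrix (Fin n) (Fin k) ℂ),
      Echelon (J.orderEmbOfFin hJ) M ∧ V = colSpan M := by
  classical
  set J : Finset (Fin n) :=
    Finset.univ.filter (fun l => ∃ v ∈ V, v l ≠ 0 ∧ ∀ m, l < m → v m = 0) with hJdef
  have hmemJ : ∀ l : Fin n, l ∈ J ↔ ∃ v ∈ V, v l ≠ 0 ∧ ∀ m, l < m → v m = 0 := by
    intro l; simp [hJdef]
  set φ : V →ₗ[ℂ] (J → ℂ) :=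
    LinearMap.pi (fun l : J =>
      ((EuclideanSpace.proj (l : Fin n) :
          EuclideanSpace ℂ (Fin n) →L[ℂ] ℂ) : EuclideanSpace ℂ (Fin n) →ₗ[ℂ] ℂ).comp V.subtype)
    with hφdef
  have hφ_apply : ∀ (v : V) (l : J), φ v l = (v : EuclideanSpace ℂ (Fin n)) (l : Fin n) := by
    intro v l; rfl
  have hφinj : Function.Injective φ := by
    rw [injective_iff_map_eq_zero]
    intro v hv0
    by_contra hvne
    have hvE : (v : EuclideanSpace ℂ (Fin n)) ≠ 0 := by
      intro hc; apply hvne; exact Subtype.ext hc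
    obtain ⟨l, hl, htop⟩ := exists_top hvE
    have hlJ : l ∈ J := (hmemJ l).2 ⟨v, v.2, hl, htop⟩
    have := congrArg (fun f : (J → ℂ) => f ⟨l, hlJ⟩) hv0
    simp only [hφ_apply] at this
    exact hl this
  have hcardle : J.card ≤ k := by
    have hwit : ∀ l : J, ∃ v : V, (v : EuclideanSpace ℂ (Fin n)) (l : Fin n) ≠ 0 ∧
        ∀ m, (l : Fin n) < m → (v : EuclideanSpace ℂ (Fin n)) m = 0 := by
      intro l
      obtain ⟨v, hvV, h1, h2⟩ := (hmemJ l).1 l.2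
      exact ⟨⟨v, hvV⟩, h1, h2⟩
    choose u hu1 hu2 using hwit
    have hli : LinearIndependent ℂ u := by
      rw [Fintype.linearIndependent_iff]
      intro c hc
      by_contra hcon
      push_neg at hcon
      obtain ⟨j₀, hj₀⟩ := hcon
      set T : Finset J := Finset.univ.filter (fun l => c l ≠ 0) with hT
      have hTne : T.Nonempty := ⟨j₀, by simp [hT, hj₀]⟩
      set l₀ := T.max' hTne with hl₀
      have hl₀T : l₀ ∈ T := T.max'_mem hTne
      have hcl₀ : c l₀ ≠ 0 := by simpa [hT] using hl₀T
      have := congrArg (fun v : V => (v : EuclideanSpace ℂ (Fin n)) (l₀ : Fin n)) hc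
      simp only at this
      rw [show ((↑(∑ l, c l • u l) : EuclideanSpace ℂ (Fin n)))
        = ∑ l, c l • (u l : EuclideanSpace ℂ (Fin n)) by push_cast; rfl] at this
      rw [WithLp.ofLp_sum, Finset.sum_apply] at this
      have hsum : ∀ l : J, l ≠ l₀ →
          c l • (u l : EuclideanSpace ℂ (Fin n)) (l₀ : Fin n) = 0 := by
        intro l hl
        rcases eq_or_ne (c l) 0 with h0 | h0
        · simp [h0]
        · have hlT : l ∈ T := by simp [hT, h0]
          have hle : l ≤ l₀ := T.le_max' l hlT
          have hlt : (l : Fin n) < (l₀ : Fin n) := by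
            rcases lt_or_eq_of_le hle with h | h
            · exact h
            · exact absurd h hl
          rw [hu2 l _ hlt, smul_zero]
      rw [Finset.sum_eq_single l₀] at this
      · have : c l₀ • (u l₀ : EuclideanSpace ℂ (Fin n)) (l₀ : Fin n) = 0 := by
          simpa using this
        rcases smul_eq_zero.1 this with h | h
        · exact hcl₀ h
        · exact hu1 l₀ h
      · intro l _ hl
        have := hsum l hl
        simpa using this
      · simp
    exact hV ▸ (by simpa using hli.fintype_card_le_finrank)
  have hcardge : k ≤ J.card := by
    have := LinearMap.finrank_le_finrank_of_injective hφinj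
    rwa [hV, Module.finrank_pi, Fintype.card_coe] at this
  have hJcard : J.card = k := le_antisymm hcardle hcardge
  have hφsurj : Function.Surjective φ := by
    have hr : Module.finrank ℂ V = Module.finrank ℂ (J → ℂ) := by
      rw [hV, Module.finrank_pi, Fintype.card_coe, hJcard]
    exact (LinearMap.injective_iff_surjective_of_finrank_eq_finrank hr).1 hφinj
  set eqv := LinearEquiv.ofBijective φ ⟨hφinj, hφsurj⟩ with heqv
  set w : J → EuclideanSpace ℂ (Fin n) :=
    fun l => (eqv.symm (Pi.single l 1) : EuclideanSpace ℂ (Fin n)) with hw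
  have hwV : ∀ l, w l ∈ V := fun l => (eqv.symm (Pi.single l 1)).2
  have hwδ : ∀ l l' : J, w l (l' : Fin n) = if l' = l then 1 else 0 := by
    intro l l'
    have : eqv (eqv.symm (Pi.single l 1)) = Pi.single l 1 :=
      eqv.apply_symm_apply (Pi.single l 1)
    have h2 := congrArg (fun f : (J → ℂ) => f l') this
    have h3 : (↑(eqv.symm (Pi.single l (1:ℂ))) : EuclideanSpace ℂ (Fin n)) (l' : Fin n)
        = (Pi.single l (1:ℂ) : J → ℂ) l' := h2
    rw [show w l (l' : Fin n)
      = (eqv.symm (Pi.single l 1) : EuclideanSpace ℂ (Fin n)) (l' : Fin n) from rfl, h3]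
    simp [Pi.single_apply]
  have hwtop : ∀ (l : J) (m : Fin n), (l : Fin n) < m → w l m = 0 := by
    intro l m hm
    by_contra hne0
    have hwne : w l ≠ 0 := by
      intro hc; rw [hc] at hne0; exact hne0 rfl
    obtain ⟨t, ht, htop⟩ := exists_top hwne
    have htJ : t ∈ J := (hmemJ t).2 ⟨w l, hwV l, ht, htop⟩
    have : w l t = if (⟨t, htJ⟩ : J) = l then 1 else 0 := hwδ l ⟨t, htJ⟩
    have htl : (⟨t, htJ⟩ : J) = l := by
      by_contra hc
      rw [if_neg hc] at this
      exact ht this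
    have : (l : Fin n) = t := by rw [← htl]
    exact hne0 (htop m (this ▸ hm))
  set σJ := J.orderEmbOfFin hJcard with hσ
  have hσJ : ∀ j : Fin k, (σJ j : Fin n) ∈ J := fun j => Finset.orderEmbOfFin_mem J hJcard j
  set M : Matrix (Fin n) (Fin k) ℂ := fun l j => w ⟨σJ j, hσJ j⟩ l with hM
  have hech : Echelon σJ M := by
    refine ⟨fun j => ?_, fun j l hl => ?_, fun j m hmj => ?_⟩
    · show w ⟨σJ j, hσJ j⟩ (σJ j) = 1
      have := hwδ ⟨σJ j, hσJ j⟩ ⟨σJ j, hσJ j⟩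
      simpa using this
    · exact hwtop ⟨σJ j, hσJ j⟩ l hl
    · show w ⟨σJ j, hσJ j⟩ (σJ m) = 0
      have := hwδ ⟨σJ j, hσJ j⟩ ⟨σJ m, hσJ m⟩
      rw [if_neg (by
        intro hc
        apply hmj
        have := congrArg (fun x : J => (x : Fin n)) hc
        exact σJ.injective this)] at this
      exact this
  refine ⟨J, hJcard, M, hech, ?_⟩
  have hle : colSpan M ≤ V := by
    rw [colSpan, Submodule.span_le]
    rintro x ⟨j, rfl⟩
    have : colVec M j = w ⟨σJ j, hσJ j⟩ := by
      apply euclid_ext; intro l; rfl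
    rw [this]
    exact hwV _
  have hfr : Module.finrank ℂ (colSpan M) = k := hech.finrank_colSpan
  exact (Submodule.eq_of_le_of_finrank_le hle (by rw [hV, hfr])).symm

lemma projCLM_inj {V W : Submodule ℂ (EuclideanSpace ℂ (Fin n))}
    (h : projCLM V = projCLM W) : V = W := by
  have key : ∀ (U : Submodule ℂ (EuclideanSpace ℂ (Fin n))) (x : EuclideanSpace ℂ (Fin n)),
      x ∈ U ↔ projCLM U x = x := by
    intro U x
    show x ∈ U ↔ U.starProjection x = x
    exact (Submodule.starProjection_eq_self_iff).symm
  ext x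
  rw [key V x, key W x, h]

lemma mem_coordSub_single (I : Finset (Fin n)) (i : Fin n) :
    EuclideanSpace.single i (1:ℂ) ∈ coordSub n I ↔ i ∈ I := by
  constructor
  · intro hmem
    by_contra hni
    have hzero : ∀ x ∈ coordSub n I, x i = 0 := by
      intro x hx
      induction hx using Submodule.span_induction with
      | mem y hy =>
        obtain ⟨l, hl, rfl⟩ := hy
        show EuclideanSpace.single l (1:ℂ) i = 0
        rw [EuclideanSpace.single_apply, if_neg]
        intro hc
        exact hni (hc ▸ hl)
      | zero => show (0 : EuclideanSpace ℂ (Fin n)) i = 0; rfl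
      | add x y _ _ hx hy =>
        show (x + y) i = 0
        rw [PiLp.add_apply, hx, hy, add_zero]
      | smul c x _ hx =>
        show (c • x) i = 0
        rw [PiLp.smul_apply, hx, smul_zero]
    have := hzero _ hmem
    rw [EuclideanSpace.single_apply, if_pos rfl] at this
    exact one_ne_zero this
  · intro hi
    exact Submodule.subset_span ⟨i, hi, rfl⟩

/-- The main iff (part 1 of the theorem). -/
lemma part1 (a : Fin n → ℝ) (ha : StrictMono a) (I : Finset (Fin n)) (hI : I.card = k)
    (V : Submodule ℂ (EuclideanSpace ℂ (Fin n))) (hV : Module.finrank ℂ V = k) :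
    Filter.Tendsto (fun t : ℝ => projCLM (V.map (flowMap n a t))) Filter.atBot
        (nhds (projCLM (coordSub n I))) ↔
      ∃! M : Matrix (Fin n) (Fin k) ℂ,
        Echelon (I.orderEmbOfFin hI) M ∧ V = colSpan M := by
  constructor
  · intro hT
    obtain ⟨J, hJ, M, hech, hVeq⟩ := exists_echelon V hV
    have hT2 : Tendsto (fun t : ℝ => projCLM (V.map (flowMap n a t))) atBot
        (𝓝 (projCLM (coordSub n J))) := by
      rw [hVeq]
      exact tendsto_of_echelon a ha J hJ hech
    have hlim : projCLM (coordSub n J) = projCLM (coordSub n I) :=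
      tendsto_nhds_unique hT2 hT
    have hJI : J = I := by
      have hc := projCLM_inj hlim
      ext i
      rw [← mem_coordSub_single J i, ← mem_coordSub_single I i, hc]
    subst hJI
    have hee : J.orderEmbOfFin hJ = J.orderEmbOfFin hI := rfl
    refine ⟨M, ⟨hee ▸ hech, hVeq⟩, ?_⟩
    rintro M' ⟨hech', hVeq'⟩
    exact Echelon.colSpan_unique hech' (hee ▸ hech) (hVeq'.symm.trans hVeq)
  · rintro ⟨M, ⟨hech, hVeq⟩, _⟩
    rw [hVeq]
    exact tendsto_of_echelon a ha I hI hech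

lemma card_free (σ : Fin k ↪o Fin n) (j : Fin k) :
    Nonempty ({l : Fin n // l < σ j ∧ l ∉ Set.range ⇑σ} ≃ Fin ((σ j : ℕ) - (j : ℕ))) := by
  classical
  refine ⟨Fintype.equivFinOfCardEq ?_⟩
  rw [Fintype.card_subtype]
  have himg : ((Finset.univ.filter (fun m : Fin k => m < j)).image ⇑σ)
      ⊆ Finset.univ.filter (fun l : Fin n => l < σ j) := by
    intro l hl
    simp only [Finset.mem_image, Finset.mem_filter, Finset.mem_univ, true_and] at hl ⊢
    obtain ⟨m, hm, rfl⟩ := hl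
    exact σ.strictMono hm
  have h1 : Finset.univ.filter (fun l : Fin n => l < σ j ∧ l ∉ Set.range ⇑σ)
      = (Finset.univ.filter (fun l : Fin n => l < σ j)) \
        ((Finset.univ.filter (fun m : Fin k => m < j)).image ⇑σ) := by
    ext l
    simp only [Finset.mem_filter, Finset.mem_sdiff, Finset.mem_image, Finset.mem_univ,
      true_and, Set.mem_range]
    constructor
    · rintro ⟨hlt, hnr⟩
      refine ⟨hlt, fun hc => hnr ?_⟩
      obtain ⟨m, _, hm⟩ := hc
      exact ⟨m, hm⟩
    · rintro ⟨hlt, hn⟩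
      refine ⟨hlt, fun hc => ?_⟩
      obtain ⟨m, hm⟩ := hc
      exact hn ⟨m, by rw [← hm] at hlt; exact σ.lt_iff_lt.1 hlt, hm⟩
  rw [h1, Finset.card_sdiff_of_subset himg]
  have h2 : (Finset.univ.filter (fun l : Fin n => l < σ j)).card = (σ j : ℕ) := by
    have he : Finset.univ.filter (fun l : Fin n => l < σ j) = Finset.Iio (σ j) := by
      ext l; simp
    rw [he, Fin.card_Iio]
  have h3 : ((Finset.univ.filter (fun m : Fin k => m < j)).image ⇑σ).card = (j : ℕ) := by
    rw [Finset.card_image_of_injective _ σ.injective]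
    have he : Finset.univ.filter (fun m : Fin k => m < j) = Finset.Iio j := by
      ext m; simp
    rw [he, Fin.card_Iio]
  rw [h2, h3]

/-- Echelon matrices are parametrized by their free entries. -/
noncomputable def echelonEquiv (σ : Fin k ↪o Fin n) :
    {M : Matrix (Fin n) (Fin k) ℂ // Echelon σ M} ≃
      ∀ j : Fin k, ({l : Fin n // l < σ j ∧ l ∉ Set.range ⇑σ} → ℂ) := by
  classical
  refine
  { toFun := fun M j l => M.1 l.1 j
    invFun := fun f =>
      ⟨fun l j => if l = σ j then 1 else
        if h : l < σ j ∧ l ∉ Set.range ⇑σ then f j ⟨l, h⟩ else 0, ?_, ?_, ?_⟩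
    left_inv := ?_
    right_inv := ?_ }
  · intro j; dsimp only; rw [if_pos rfl]
  · intro j l hl
    dsimp only
    rw [if_neg hl.ne', dif_neg]
    rintro ⟨h1, -⟩
    exact lt_asymm hl h1
  · intro j m hmj
    dsimp only
    rw [if_neg (fun hc => hmj (σ.injective hc)), dif_neg]
    rintro ⟨-, h2⟩
    exact h2 ⟨m, rfl⟩
  · rintro ⟨M, hM⟩
    apply Subtype.ext
    funext l j
    show (if l = σ j then 1 else
      if h : l < σ j ∧ l ∉ Set.range ⇑σ then M l j else 0) = M l j
    rcases eq_or_ne l (σ j) with rfl | hne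
    · rw [if_pos rfl, (hM.1 j).symm]
    · rw [if_neg hne]
      rcases lt_trichotomy l (σ j) with hlt | hcase | hgt
      · by_cases hr : l ∈ Set.range ⇑σ
        · obtain ⟨m, rfl⟩ := hr
          rw [dif_neg (fun h => h.2 ⟨m, rfl⟩)]
          exact (hM.2.2 j m (fun hc => hne (by rw [hc]))).symm
        · rw [dif_pos ⟨hlt, hr⟩]
      · exact absurd hcase hne
      · rw [dif_neg (fun h => lt_asymm hgt h.1)]
        exact (hM.2.1 j l hgt).symm
  · intro f
    funext j l
    show (if (l : Fin n) = σ j then 1 else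
      if h : (l : Fin n) < σ j ∧ (l : Fin n) ∉ Set.range ⇑σ then f j ⟨l, h⟩ else 0) = f j l
    rw [if_neg (ne_of_lt l.2.1), dif_pos l.2]

end Exists

/-! ### The main theorem -/

/-- Schubert-cell description of the unstable set of the coordinate subspace
`E_I` under the flow `V ↦ exp(−tA)·V`: a `k`-plane `V` flows (in the projection
metric) to `E_I` as `t → −∞` iff `V` is the column span of a (unique) matrix in
column-echelon form with pivots `I`; consequently the unstable set is in
bijection with `∏_{j=1}^{k} ℂ^{i_j − j}`. -/
theorem stmt11 (n k : ℕ) (hkn : k ≤ n) (a : Fin n → ℝ) (ha : StrictMono a)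
    (I : Finset (Fin n)) (hI : I.card = k) :
    (∀ V : Submodule ℂ (EuclideanSpace ℂ (Fin n)), Module.finrank ℂ V = k →
      (Filter.Tendsto (fun t : ℝ => projCLM (V.map (flowMap n a t))) Filter.atBot
          (nhds (projCLM (coordSub n I))) ↔
        ∃! M : Matrix (Fin n) (Fin k) ℂ,
          Echelon (I.orderEmbOfFin hI) M ∧ V = colSpan M)) ∧
    Nonempty
      ({V : Submodule ℂ (EuclideanSpace ℂ (Fin n)) //
          Module.finrank ℂ V = k ∧
          Filter.Tendsto (fun t : ℝ => projCLM (V.map (flowMap n a t))) Filter.atBot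
            (nhds (projCLM (coordSub n I)))} ≃
        ∀ j : Fin k, Fin ((I.orderEmbOfFin hI j : ℕ) - (j : ℕ)) → ℂ) := by
  refine ⟨fun V hV => part1 a ha I hI V hV, ?_⟩
  set σ := I.orderEmbOfFin hI with hσ
  let e1 : {V : Submodule ℂ (EuclideanSpace ℂ (Fin n)) //
          Module.finrank ℂ V = k ∧
          Filter.Tendsto (fun t : ℝ => projCLM (V.map (flowMap n a t))) Filter.atBot
            (nhds (projCLM (coordSub n I)))} ≃
      {M : Matrix (Fin n) (Fin k) ℂ // Echelon σ M} :=
  { toFun := fun V =>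
      ⟨((part1 a ha I hI V.1 V.2.1).mp V.2.2).exists.choose,
        ((part1 a ha I hI V.1 V.2.1).mp V.2.2).exists.choose_spec.1⟩
    invFun := fun M =>
      ⟨colSpan M.1, M.2.finrank_colSpan, tendsto_of_echelon a ha I hI M.2⟩
    left_inv := fun V => Subtype.ext
      (((part1 a ha I hI V.1 V.2.1).mp V.2.2).exists.choose_spec.2).symm
    right_inv := fun M => by
      apply Subtype.ext
      have hfr : Module.finrank ℂ (colSpan M.1) = k := M.2.finrank_colSpan
      have hT := tendsto_of_echelon a ha I hI M.2
      have hspec := ((part1 a ha I hI (colSpan M.1) hfr).mp hT).exists.choose_spec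
      exact Echelon.colSpan_unique hspec.1 M.2 hspec.2.symm }
  have e3 : ∀ j : Fin k, ({l : Fin n // l < σ j ∧ l ∉ Set.range ⇑σ} → ℂ) ≃
      (Fin ((σ j : ℕ) - (j : ℕ)) → ℂ) := fun j =>
    Equiv.arrowCongr (Classical.choice (card_free σ j)) (Equiv.refl ℂ)
  exact ⟨e1.trans ((echelonEquiv σ).trans (Equiv.piCongrRight e3))⟩

end Stmt11
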